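/- Let (V, Ω, q) be a k-symplectic complex vector space: V has dimension 4n, Ω ⊂ Λ²V* has dimension k, q is a quadratic form on Ω, every nonzero ω ∈ Ω with q(ω,ω) = 0 has 2n-dimensional kernel, and every ω ∈ Ω with q(ω,ω) ≠ 0 is nondegenerate. If q is nondegenerate and k ≥ 2, then V carries the structure of a nontrivial module over the even Clifford algebra Cl⁰(Ω, q). -/

import Mathlib

set_option synthInstance.maxHeartbeats 400000
set_option maxHeartbeats 800000

open Module LinearMap

/-- Auxiliary linear-algebra fact: if `X : End ℂ V` with `dim V = 4n` has the kernels of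
`X + s•1` and `X - s•1` (for `s ≠ 0`) both of dimension `2n`, then `X^2 = s^2 • 1`. -/
theorem stmt3_aux {V : Type*} [AddCommGroup V] [Module ℂ V] [FiniteDimensional ℂ V] {n : ℕ}
    (hdim : finrank ℂ V = 4 * n) (X : Module.End ℂ V) (s : ℂ) (hs : s ≠ 0)
    (hplus : finrank ℂ (LinearMap.ker (X + s • (1 : Module.End ℂ V))) = 2 * n)
    (hminus : finrank ℂ (LinearMap.ker (X - s • (1 : Module.End ℂ V))) = 2 * n) :
    X * X = (s ^ 2) • 1 := by
  have hdisj : Disjoint (LinearMap.ker (X + s • (1 : Module.End ℂ V)))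
      (LinearMap.ker (X - s • (1 : Module.End ℂ V))) := by
    rw [Submodule.disjoint_def]
    intro v hv1 hv2
    rw [LinearMap.mem_ker, LinearMap.add_apply, LinearMap.smul_apply, Module.End.one_apply] at hv1
    rw [LinearMap.mem_ker, LinearMap.sub_apply, LinearMap.smul_apply, Module.End.one_apply] at hv2
    have h2 : (2 * s) • v = 0 := by
      calc (2 * s) • v = (X v + s • v) - (X v - s • v) := by module
      _ = 0 := by rw [hv1, hv2, sub_zero]
    exact (smul_eq_zero.mp h2).resolve_left (mul_ne_zero two_ne_zero hs)
  have htop : LinearMap.ker (X + s • (1 : Module.End ℂ V))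
      ⊔ LinearMap.ker (X - s • (1 : Module.End ℂ V)) = ⊤ :=
    Submodule.eq_top_of_disjoint _ _ (by rw [hplus, hminus, hdim]; omega) hdisj
  have hle : LinearMap.ker (X + s • (1 : Module.End ℂ V))
      ⊔ LinearMap.ker (X - s • (1 : Module.End ℂ V))
      ≤ LinearMap.ker (X * X - s ^ 2 • (1 : Module.End ℂ V)) := by
    apply sup_le
    · intro v hv
      rw [LinearMap.mem_ker, LinearMap.add_apply, LinearMap.smul_apply, Module.End.one_apply] at hv
      have hXv : X v = -(s • v) := by rwa [add_eq_zero_iff_eq_neg] at hv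
      rw [LinearMap.mem_ker, LinearMap.sub_apply, Module.End.mul_apply, LinearMap.smul_apply,
        Module.End.one_apply, hXv, map_neg, map_smul, hXv]
      module
    · intro v hv
      rw [LinearMap.mem_ker, LinearMap.sub_apply, LinearMap.smul_apply, Module.End.one_apply] at hv
      have hXv : X v = s • v := by rwa [sub_eq_zero] at hv
      rw [LinearMap.mem_ker, LinearMap.sub_apply, Module.End.mul_apply, LinearMap.smul_apply,
        Module.End.one_apply, hXv, map_smul, hXv]
      module
  have hker : LinearMap.ker (X * X - s ^ 2 • (1 : Module.End ℂ V)) = ⊤ :=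
    eq_top_iff.mpr (htop ▸ hle)
  have h0 := LinearMap.ker_eq_top.mp hker
  rwa [sub_eq_zero] at h0

/-- a `k`-symplectic vector space `(V, Ω, q)` (here `Ω` is given as an
abstract `k`-dimensional space embedded in `Λ²V*` by an injective linear map `emb`)
with `q` nondegenerate and `k ≥ 2` makes `V` a module over the even Clifford
algebra `Cl⁰(Ω, q)` (nontrivial, since the action is unital and `V ≠ 0`). -/
theorem stmt3 (V : Type*) [AddCommGroup V] [Module ℂ V] [FiniteDimensional ℂ V]
    (Ω : Type*) [AddCommGroup Ω] [Module ℂ Ω] [FiniteDimensional ℂ Ω]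
    (n k : ℕ) (hn : 0 < n) (hdim : finrank ℂ V = 4 * n)
    (emb : Ω →ₗ[ℂ] LinearMap.BilinForm ℂ V) (hemb : Function.Injective emb)
    (halt : ∀ ω : Ω, (emb ω).IsAlt)
    (hk : finrank ℂ Ω = k) (hk2 : 2 ≤ k)
    (q : QuadraticForm ℂ Ω)
    (hdich : ∀ ω : Ω, ω ≠ 0 →
      (q ω = 0 → finrank ℂ (LinearMap.ker (emb ω)) = 2 * n) ∧
      (q ω ≠ 0 → LinearMap.ker (emb ω) = ⊥))
    (hqnd : ∀ x : Ω, (∀ y : Ω, QuadraticMap.polar q x y = 0) → x = 0) :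
    Nonempty (↥(CliffordAlgebra.even q) →ₐ[ℂ] Module.End ℂ V) := by
  classical
  -- basic polarization identity
  have hqadd : ∀ x y : Ω, q (x + y) = q x + q y + QuadraticMap.polar q x y := by
    intro x y
    rw [QuadraticMap.polar]
    ring
  -- there is an anisotropic vector
  obtain ⟨ω₀, hω₀⟩ : ∃ ω : Ω, q ω ≠ 0 := by
    by_contra hcon
    push_neg at hcon
    have hzero : ∀ x : Ω, x = 0 := fun x =>
      hqnd x fun y => by simp [QuadraticMap.polar, hcon]
    have hsub : Subsingleton Ω := ⟨fun a b => by rw [hzero a, hzero b]⟩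
    rw [finrank_zero_of_subsingleton] at hk
    omega
  -- normalize it to `q ω₁ = -1`
  obtain ⟨c, hc⟩ := IsAlgClosed.exists_pow_nat_eq (k := ℂ) (-(q ω₀)⁻¹) zero_lt_two
  set ω₁ : Ω := c • ω₀ with hω₁def
  have hq1 : q ω₁ = -1 := by
    have h1 : q ω₁ = (c * c) * q ω₀ := by
      rw [hω₁def, QuadraticMap.map_smul, smul_eq_mul]
    rw [h1, ← sq, hc, neg_mul, inv_mul_cancel₀ hω₀]
  have hω₁ne : ω₁ ≠ 0 := by
    intro h
    rw [h, map_zero] at hq1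
    norm_num at hq1
  have hself : QuadraticMap.polar q ω₁ ω₁ = -2 := by
    rw [QuadraticMap.polar_self, hq1]
    norm_num
  -- `emb ω₁` is an isomorphism `V ≃ V*`
  have hTker : LinearMap.ker (emb ω₁) = ⊥ := (hdich ω₁ hω₁ne).2 (by rw [hq1]; norm_num)
  have hTinj : Function.Injective (emb ω₁) := LinearMap.ker_eq_bot.mp hTker
  have hfr : finrank ℂ (V →ₗ[ℂ] ℂ) = finrank ℂ V := Subspace.dual_finrank_eq
  have hTsurj : Function.Surjective (emb ω₁) :=
    (LinearMap.injective_iff_surjective_of_finrank_eq_finrank hfr.symm).mp hTinj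
  set e : V ≃ₗ[ℂ] (V →ₗ[ℂ] ℂ) := LinearEquiv.ofBijective (emb ω₁) ⟨hTinj, hTsurj⟩ with hedef
  set A₀ : Ω →ₗ[ℂ] Module.End ℂ V :=
    (LinearMap.llcomp ℂ V (V →ₗ[ℂ] ℂ) V e.symm.toLinearMap) ∘ₗ emb with hA₀def
  have hTA : ∀ (ω : Ω) (v : V), emb ω₁ (A₀ ω v) = emb ω v := by
    intro ω v
    exact e.apply_symm_apply (emb ω v)
  -- kernels of `emb (ω + t ω₁)` are eigenspace-kernels of `A₀ ω`
  have hkerker : ∀ (ω : Ω) (t : ℂ),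
      LinearMap.ker (emb (ω + t • ω₁)) =
        LinearMap.ker (A₀ ω + t • (1 : Module.End ℂ V)) := by
    intro ω t
    ext v
    have hco : emb (ω + t • ω₁) v = emb ω₁ ((A₀ ω + t • (1 : Module.End ℂ V)) v) := by
      simp only [map_add, map_smul, LinearMap.add_apply, LinearMap.smul_apply,
        Module.End.one_apply, hTA]
    rw [LinearMap.mem_ker, LinearMap.mem_ker, hco]
    constructor
    · intro h
      apply hTinj
      rw [map_zero]
      exact h
    · intro h
      rw [h, map_zero]
  -- key identity, anisotropic case
  have keyA : ∀ ω' : Ω, QuadraticMap.polar q ω₁ ω' = 0 → q ω' ≠ 0 →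
      A₀ ω' * A₀ ω' = q ω' • (1 : Module.End ℂ V) := by
    intro ω' hperp hqne
    obtain ⟨s, hs⟩ := IsAlgClosed.exists_pow_nat_eq (k := ℂ) (q ω') zero_lt_two
    have hsne : s ≠ 0 := by
      intro h
      apply hqne
      rw [← hs, h]
      ring
    have hqc : ∀ t : ℂ, q (ω' + t • ω₁) = q ω' - t ^ 2 := by
      intro t
      rw [hqadd, QuadraticMap.map_smul, hq1, QuadraticMap.polar_smul_right,
        QuadraticMap.polar_comm, hperp]
      simp only [smul_eq_mul]
      ring
    have hne : ∀ t : ℂ, t ≠ 0 → ω' + t • ω₁ ≠ 0 := by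
      intro t ht h
      have h' : ω' = -(t • ω₁) := by rwa [add_eq_zero_iff_eq_neg] at h
      rw [h', QuadraticMap.polar_neg_right, QuadraticMap.polar_smul_right, hself] at hperp
      have ht0 : t = 0 := by
        simp only [smul_eq_mul] at hperp
        have := neg_eq_zero.mp hperp
        simpa using this
      exact ht ht0
    have hplus := (hdich _ (hne s hsne)).1 (by rw [hqc, ← hs]; ring)
    have hminus := (hdich _ (hne (-s) (neg_ne_zero.mpr hsne))).1 (by rw [hqc, ← hs]; ring)
    rw [hkerker] at hplus hminus
    rw [neg_smul, ← sub_eq_add_neg] at hminus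
    have := stmt3_aux hdim (A₀ ω') s hsne hplus hminus
    rw [this, hs]
  -- key identity, general case (polynomial interpolation in `t`)
  have key : ∀ ω' : Ω, QuadraticMap.polar q ω₁ ω' = 0 →
      A₀ ω' * A₀ ω' = q ω' • (1 : Module.End ℂ V) := by
    intro ω' hperp
    by_cases hqz : q ω' = 0
    swap
    · exact keyA ω' hperp hqz
    by_cases h0 : ω' = 0
    · rw [h0]
      simp
    obtain ⟨τ, hτ1, hτ2⟩ : ∃ τ : Ω,
        QuadraticMap.polar q ω₁ τ = 0 ∧ QuadraticMap.polar q ω' τ ≠ 0 := by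
      by_contra hcon
      push_neg at hcon
      refine h0 (hqnd ω' fun y => ?_)
      set d := QuadraticMap.polar q ω₁ y with hd
      have hy' : QuadraticMap.polar q ω₁ (y - (d / (-2)) • ω₁) = 0 := by
        rw [QuadraticMap.polar_sub_right, QuadraticMap.polar_smul_right, hself, ← hd]
        simp only [smul_eq_mul]
        ring
      have h1 := hcon _ hy'
      have hperp' : QuadraticMap.polar q ω' ω₁ = 0 := by
        rw [QuadraticMap.polar_comm]
        exact hperp
      calc QuadraticMap.polar q ω' y
          = QuadraticMap.polar q ω' ((y - (d / (-2)) • ω₁) + (d / (-2)) • ω₁) := by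
            rw [show (y - (d / (-2)) • ω₁) + (d / (-2)) • ω₁ = y by module]
        _ = QuadraticMap.polar q ω' (y - (d / (-2)) • ω₁)
              + (d / (-2)) • QuadraticMap.polar q ω' ω₁ := by
            rw [QuadraticMap.polar_add_right, QuadraticMap.polar_smul_right]
        _ = 0 := by rw [h1, hperp']; simp
    set X := A₀ ω' with hX
    set Y := A₀ τ with hY
    set p := QuadraticMap.polar q ω' τ with hp
    have hqval : ∀ t : ℂ, q (ω' + t • τ) = t * p + t ^ 2 * q τ := by
      intro t
      rw [hqadd, QuadraticMap.map_smul, QuadraticMap.polar_smul_right, hqz, hp]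
      simp only [smul_eq_mul]
      ring
    set C₀ := X * X with hC0d
    set C₁ := X * Y + Y * X - p • (1 : Module.End ℂ V) with hC1d
    set C₂ := Y * Y - q τ • (1 : Module.End ℂ V) with hC2d
    have hF : ∀ t : ℂ, t ≠ 0 → q (ω' + t • τ) ≠ 0 →
        C₀ + t • C₁ + t ^ 2 • C₂ = 0 := by
      intro t ht hqt
      have hA := keyA (ω' + t • τ)
        (by rw [QuadraticMap.polar_add_right, QuadraticMap.polar_smul_right, hperp, hτ1]; simp)
        hqt
      have hlin : A₀ (ω' + t • τ) = X + t • Y := by rw [map_add, map_smul]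
      rw [hlin, hqval] at hA
      have expand2 : (X + t • Y) * (X + t • Y)
          = X * X + t • (X * Y) + t • (Y * X) + (t * t) • (Y * Y) := by
        simp only [mul_add, add_mul, smul_mul_assoc, mul_smul_comm, smul_smul]
        module
      rw [expand2] at hA
      have hre : C₀ + t • C₁ + t ^ 2 • C₂
          = (X * X + t • (X * Y) + t • (Y * X) + (t * t) • (Y * Y))
            - (t * p + t ^ 2 * q τ) • (1 : Module.End ℂ V) := by
        rw [hC0d, hC1d, hC2d]
        module
      rw [hre, hA, sub_self]
    obtain ⟨t, ht0, htg⟩ : ∃ t : ℂ, t ≠ 0 ∧ ∀ m : ℂ,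
        (m = 1 ∨ m = -1 ∨ m = 2 ∨ m = -2) → q (ω' + (m * t) • τ) ≠ 0 := by
      have hpne : p ≠ 0 := hτ2
      by_cases hτq : q τ = 0
      · refine ⟨1, one_ne_zero, fun m hm => ?_⟩
        have hm0 : m ≠ 0 := by rcases hm with h | h | h | h <;> rw [h] <;> norm_num
        rw [hqval, hτq]
        simp only [mul_one, mul_zero, add_zero]
        exact mul_ne_zero hm0 hpne
      · have hr : -p / q τ ≠ 0 := div_ne_zero (neg_ne_zero.mpr hpne) hτq
        refine ⟨3 * (-p / q τ), mul_ne_zero (by norm_num) hr, fun m hm => ?_⟩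
        have hm0 : m ≠ 0 := by rcases hm with h | h | h | h <;> rw [h] <;> norm_num
        rw [hqval]
        have hval : ∀ s : ℂ, s * p + s ^ 2 * q τ = s * (p + s * q τ) := fun s => by ring
        rw [hval]
        apply mul_ne_zero (mul_ne_zero hm0 (mul_ne_zero (by norm_num) hr))
        have hcomp : p + (m * (3 * (-p / q τ))) * q τ = p * (1 - 3 * m) := by
          field_simp
          ring
        rw [hcomp]
        apply mul_ne_zero hpne
        rcases hm with h | h | h | h <;> rw [h] <;> norm_num
    have e1 := hF (1 * t) (by simpa using ht0) (htg 1 (by norm_num))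
    have e2 := hF ((-1) * t) (mul_ne_zero (by norm_num) ht0) (htg (-1) (by norm_num))
    have e3 := hF (2 * t) (mul_ne_zero (by norm_num) ht0) (htg 2 (by norm_num))
    have e4 := hF ((-2) * t) (mul_ne_zero (by norm_num) ht0) (htg (-2) (by norm_num))
    have k1 : (2 : ℂ) • C₀ + (2 * t ^ 2) • C₂ = 0 := by
      have hcomb : (2 : ℂ) • C₀ + (2 * t ^ 2) • C₂
          = (C₀ + (1 * t) • C₁ + (1 * t) ^ 2 • C₂)
            + (C₀ + ((-1) * t) • C₁ + ((-1) * t) ^ 2 • C₂) := by module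
      rw [hcomb, e1, e2, add_zero]
    have k2 : (2 : ℂ) • C₀ + (8 * t ^ 2) • C₂ = 0 := by
      have hcomb : (2 : ℂ) • C₀ + (8 * t ^ 2) • C₂
          = (C₀ + (2 * t) • C₁ + (2 * t) ^ 2 • C₂)
            + (C₀ + ((-2) * t) • C₁ + ((-2) * t) ^ 2 • C₂) := by module
      rw [hcomb, e3, e4, add_zero]
    have hC2 : C₂ = 0 := by
      have h6 : ((6 : ℂ) * t ^ 2) • C₂ = 0 := by
        have hcomb : ((6 : ℂ) * t ^ 2) • C₂
            = ((2 : ℂ) • C₀ + (8 * t ^ 2) • C₂) - ((2 : ℂ) • C₀ + (2 * t ^ 2) • C₂) := by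
          module
        rw [hcomb, k1, k2, sub_zero]
      exact (smul_eq_zero.mp h6).resolve_left
        (mul_ne_zero (by norm_num) (pow_ne_zero 2 ht0))
    have hC0 : C₀ = 0 := by
      rw [hC2, smul_zero, add_zero] at k1
      exact (smul_eq_zero.mp k1).resolve_left (by norm_num)
    rw [hqz, zero_smul]
    exact hC0
  -- the projection onto the orthogonal complement of `ω₁`
  set σ : Ω →ₗ[ℂ] ℂ := (-(2⁻¹ : ℂ)) • ((QuadraticMap.polarBilin q) ω₁) with hσdef
  have hσ : ∀ m : Ω, σ m = -(2⁻¹ : ℂ) * QuadraticMap.polar q ω₁ m := by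
    intro m
    rw [hσdef, LinearMap.smul_apply, QuadraticMap.polarBilin_apply_apply, smul_eq_mul]
  set P : Ω →ₗ[ℂ] Ω := LinearMap.id - (LinearMap.toSpanSingleton ℂ Ω ω₁) ∘ₗ σ with hPdef
  have hP : ∀ m : Ω, P m = m - σ m • ω₁ := by
    intro m
    rw [hPdef]
    simp [LinearMap.toSpanSingleton_apply]
  have hPperp : ∀ m : Ω, QuadraticMap.polar q ω₁ (P m) = 0 := by
    intro m
    rw [hP, QuadraticMap.polar_sub_right, QuadraticMap.polar_smul_right, hself, hσ]
    simp only [smul_eq_mul]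
    ring
  have hqP : ∀ m : Ω, q m = q (P m) - (σ m) ^ 2 := by
    intro m
    have hm : m = P m + σ m • ω₁ := by rw [hP]; module
    calc q m = q (P m + σ m • ω₁) := by rw [← hm]
      _ = q (P m) + q (σ m • ω₁) + QuadraticMap.polar q (P m) (σ m • ω₁) := hqadd _ _
      _ = q (P m) - (σ m) ^ 2 := by
          rw [QuadraticMap.map_smul, hq1, QuadraticMap.polar_smul_right,
            QuadraticMap.polar_comm, hPperp]
          simp only [smul_eq_mul]
          ring
  -- the two linear maps whose products give the even Clifford action
  set gg : Ω →ₗ[ℂ] Module.End ℂ V :=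
    A₀ ∘ₗ P + (Algebra.linearMap ℂ (Module.End ℂ V)) ∘ₗ σ with hggdef
  set hh : Ω →ₗ[ℂ] Module.End ℂ V :=
    A₀ ∘ₗ P - (Algebra.linearMap ℂ (Module.End ℂ V)) ∘ₗ σ with hhhdef
  have hgg : ∀ m : Ω, gg m = A₀ (P m) + σ m • (1 : Module.End ℂ V) := by
    intro m
    rw [hggdef]
    simp [Algebra.algebraMap_eq_smul_one]
  have hhh : ∀ m : Ω, hh m = A₀ (P m) - σ m • (1 : Module.End ℂ V) := by
    intro m
    rw [hhhdef]
    simp [Algebra.algebraMap_eq_smul_one]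
  have expand : ∀ (Z : Module.End ℂ V) (a : ℂ),
      (Z + a • 1) * (Z - a • 1) = Z * Z - (a * a) • 1 ∧
      (Z - a • 1) * (Z + a • 1) = Z * Z - (a * a) • 1 := by
    intro Z a
    constructor <;>
    · simp only [mul_sub, sub_mul, add_mul, mul_add, smul_mul_assoc, mul_smul_comm, smul_smul,
        one_mul, mul_one]
      module
  have hZ : ∀ m : Ω, A₀ (P m) * A₀ (P m) = q (P m) • (1 : Module.End ℂ V) :=
    fun m => key (P m) (hPperp m)
  have hghm : ∀ m : Ω, gg m * hh m = algebraMap ℂ (Module.End ℂ V) (q m) := by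
    intro m
    rw [hgg, hhh, (expand (A₀ (P m)) (σ m)).1, hZ, Algebra.algebraMap_eq_smul_one, hqP m,
      ← sub_smul, ← pow_two]
  have hhgm : ∀ m : Ω, hh m * gg m = algebraMap ℂ (Module.End ℂ V) (q m) := by
    intro m
    rw [hgg, hhh, (expand (A₀ (P m)) (σ m)).2, hZ, Algebra.algebraMap_eq_smul_one, hqP m,
      ← sub_smul, ← pow_two]
  set bilin : Ω →ₗ[ℂ] Ω →ₗ[ℂ] Module.End ℂ V :=
    ((LinearMap.mul ℂ (Module.End ℂ V)) ∘ₗ gg).compl₂ hh with hbdef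
  have hbil : ∀ a b : Ω, bilin a b = gg a * hh b := by
    intro a b
    rw [hbdef]
    simp [LinearMap.compl₂_apply, LinearMap.mul_apply']
  refine ⟨CliffordAlgebra.even.lift q
    (CliffordAlgebra.EvenHom.mk bilin (fun m => ?_) (fun m₁ m₂ m₃ => ?_))⟩
  · rw [hbil]
    exact hghm m
  · simp only [hbil]
    calc gg m₁ * hh m₂ * (gg m₂ * hh m₃)
        = gg m₁ * (hh m₂ * gg m₂ * hh m₃) := by
          rw [mul_assoc, mul_assoc]
      _ = gg m₁ * (algebraMap ℂ (Module.End ℂ V) (q m₂) * hh m₃) := by rw [hhgm]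
      _ = q m₂ • (gg m₁ * hh m₃) := by
          rw [Algebra.algebraMap_eq_smul_one, smul_mul_assoc, one_mul, mul_smul_comm]
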